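/- The q-Vandermonde summation holds: ₂φ₁[q^{−n}, b; c; q, q] = (c/b; q)_n b^n / (c; q)_n for every nonnegative integer n, provided (c;q)_n ≠ 0. -/

import Mathlib

open Finset

/-- The q-Pochhammer symbol `(a;q)_n`. -/
noncomputable def qPoch (a q : ℂ) (n : ℕ) : ℂ := ∏ j ∈ Finset.range n, (1 - a * q ^ j)

namespace QVAux


lemma qPoch_zero (a q : ℂ) : qPoch a q 0 = 1 := by simp [qPoch]

lemma qPoch_succ (a q : ℂ) (n : ℕ) :
    qPoch a q (n + 1) = qPoch a q n * (1 - a * q ^ n) := Finset.prod_range_succ _ _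

lemma qPoch_succ' (a q : ℂ) (n : ℕ) :
    qPoch a q (n + 1) = (1 - a) * qPoch (a * q) q n := by
  rw [qPoch, Finset.prod_range_succ', qPoch, mul_comm]
  simp only [pow_zero, mul_one]
  congr 1
  apply Finset.prod_congr rfl
  intro j _
  ring_nf

lemma qPoch_add (a q : ℂ) (m k : ℕ) :
    qPoch a q (m + k) = qPoch a q m * qPoch (a * q ^ m) q k := by
  rw [qPoch, Finset.prod_range_add, qPoch, qPoch]
  congr 1
  apply Finset.prod_congr rfl
  intro j _
  rw [pow_add]
  ring

/-- q-binomial coefficient as a complex number. -/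
noncomputable def qb (q : ℂ) : ℕ → ℕ → ℂ
  | 0, 0 => 1
  | 0, _+1 => 0
  | _+1, 0 => 1
  | n+1, k+1 => qb q n (k+1) * q ^ (k+1) + qb q n k

lemma qb_zero (q : ℂ) (n : ℕ) : qb q n 0 = 1 := by cases n <;> rfl

lemma qb_succ_succ (q : ℂ) (n k : ℕ) :
    qb q (n+1) (k+1) = qb q n (k+1) * q ^ (k+1) + qb q n k := rfl

lemma qb_eq_zero (q : ℂ) : ∀ n k, n < k → qb q n k = 0 := by
  intro n
  induction n with
  | zero => intro k hk; match k, hk with | (k+1), _ => rfl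
  | succ n ih =>
    intro k hk
    match k, hk with
    | (k+1), hk =>
      rw [qb_succ_succ, ih (k+1) (by omega), ih k (by omega)]
      ring

lemma qb_self (q : ℂ) : ∀ n, qb q n n = 1 := by
  intro n
  induction n with
  | zero => rfl
  | succ n ih => rw [qb_succ_succ, ih, qb_eq_zero q n (n+1) (by omega)]; ring

lemma qb_mul (q : ℂ) : ∀ n k, k ≤ n →
    qb q n k * (qPoch q q k * qPoch q q (n - k)) = qPoch q q n := by
  intro n
  induction n with
  | zero =>
    intro k hk
    interval_cases k
    simp [qb_zero, qPoch_zero]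
  | succ n ih =>
    intro k hk
    match k with
    | 0 => simp [qb_zero, qPoch_zero]
    | j+1 =>
      rcases eq_or_lt_of_le hk with h | h
      · have hj : j = n := by omega
        subst hj
        rw [qb_self, Nat.sub_self, qPoch_zero]
        ring
      · have hj : j + 1 ≤ n := by omega
        obtain ⟨m, rfl⟩ : ∃ m, n = m + (j + 1) := ⟨n - (j+1), by omega⟩
        have h1 := ih (j+1) hj
        have h2 := ih j (by omega)
        rw [show m + (j+1) - (j+1) = m from by omega] at h1
        rw [show m + (j+1) - j = m + 1 from by omega] at h2
        rw [qb_succ_succ]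
        rw [show m + (j+1) + 1 - (j+1) = m + 1 from by omega]
        rw [qPoch_succ q q (m + (j+1))]
        rw [qPoch_succ q q m] at h2 ⊢
        rw [qPoch_succ q q j] at h1 ⊢
        have epow : q ^ (j+1) * q ^ m = q ^ (m + (j + 1)) := by rw [← pow_add]; congr 1; omega
        linear_combination (q^(j+1) * (1 - q * q^m)) * h1 + (1 - q * q^j) * h2
          - q * qPoch q q (m+(j+1)) * epow


/-- The generic term of the cleared q-Vandermonde sum. -/
noncomputable def T (q : ℂ) (n k : ℕ) (b c : ℂ) : ℂ :=
  (-1) ^ k * q ^ (∑ i ∈ range k, i) * q ^ k * (q ^ (n * k))⁻¹ * qb q n k *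
    qPoch b q k * qPoch (c * q ^ k) q (n - k)

lemma main (q : ℂ) (hq : q ≠ 0) : ∀ (n : ℕ) (b c : ℂ),
    ∑ k ∈ range (n + 1), T q n k b c = ∏ j ∈ range n, (b - c * q ^ j) := by
  intro n
  induction n with
  | zero =>
    intro b c
    simp [T, qb_zero, qPoch_zero]
  | succ n ih =>
    intro b c
    have claimA : ∀ j ∈ range (n + 1), T q (n+1) (j+1) b c
        = (1 - c * q ^ n) * T q n (j+1) b c
          - (q ^ n)⁻¹ * (1 - b) * T q n j (b * q) (c * q) := by
      intro j hj
      have hjn : j ≤ n := by have := mem_range.mp hj; omega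
      rcases eq_or_lt_of_le hjn with h | h
      · -- j = n : top term
        subst h
        simp only [T]
        rw [qb_succ_succ, qb_eq_zero q j (j+1) (by omega), qb_self]
        rw [Nat.succ_sub_succ, Nat.sub_self, qPoch_succ' b q j]
        simp only [qPoch_zero]
        rw [Finset.sum_range_succ]
        field_simp
        ring
      · -- j < n
        obtain ⟨m, rfl⟩ : ∃ m, n = m + (j + 1) := ⟨n - (j+1), by omega⟩
        simp only [T]
        rw [qb_succ_succ]
        rw [Nat.succ_sub_succ, show m + (j+1) - (j+1) = m from by omega,
          show m + (j+1) - j = m + 1 from by omega]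
        rw [show c * q * q ^ j = c * q ^ (j+1) from by ring]
        rw [qPoch_succ (c * q ^ (j+1)) q m, qPoch_succ' b q j,
          Finset.sum_range_succ]
        have e1 : c * q ^ (j+1) * q ^ m = c * q ^ (m + (j+1)) := by
          rw [mul_assoc, ← pow_add]; congr 2; omega
        rw [e1]
        field_simp
        ring
    have hz : T q n (n+1) b c = 0 := by
      simp [T, qb_eq_zero q n (n+1) (by omega)]
    have h0 : T q (n+1) 0 b c = (1 - c * q ^ n) * T q n 0 b c := by
      simp only [T, qb_zero, qPoch_zero, pow_zero, mul_one, Nat.sub_zero, Nat.mul_zero,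
        inv_one, Finset.sum_range_zero, one_mul]
      rw [qPoch_succ]
      ring
    have key : ∑ k ∈ range (n + 1 + 1), T q (n+1) k b c
        = (1 - c * q ^ n) * ∑ k ∈ range (n + 1), T q n k b c
          - (q ^ n)⁻¹ * (1 - b) * ∑ j ∈ range (n + 1), T q n j (b * q) (c * q) := by
      rw [Finset.sum_range_succ']
      rw [Finset.sum_congr rfl claimA]
      rw [Finset.sum_sub_distrib, ← Finset.mul_sum, ← Finset.mul_sum]
      have h2 : ∑ j ∈ range (n + 1), T q n (j+1) b c
          = ∑ k ∈ range (n + 1), T q n k b c - T q n 0 b c := by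
        have h3 := Finset.sum_range_succ' (fun k => T q n k b c) (n + 1)
        rw [Finset.sum_range_succ, hz, add_zero] at h3
        rw [h3]
        ring
      rw [h2, h0]
      ring
    rw [key, ih b c, ih (b * q) (c * q)]
    have hp : ∏ j ∈ range n, (b * q - c * q * q ^ j) = q ^ n * ∏ j ∈ range n, (b - c * q ^ j) := by
      rw [show (q : ℂ) ^ n = ∏ _j ∈ range n, q from by rw [Finset.prod_const, Finset.card_range]]
      rw [← Finset.prod_mul_distrib]
      apply Finset.prod_congr rfl
      intro j _
      ring
    rw [hp, Finset.prod_range_succ]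
    field_simp
    ring


lemma A1 (q : ℂ) (hq : q ≠ 0) (n k : ℕ) :
    q ^ (n * k) * qPoch (q ^ (-(n : ℤ))) q k = ∏ j ∈ range k, (q ^ n - q ^ j) := by
  rw [show (q : ℂ) ^ (n * k) = ∏ _j ∈ range k, q ^ n from by
    rw [Finset.prod_const, Finset.card_range, ← pow_mul]]
  rw [qPoch, ← Finset.prod_mul_distrib]
  apply Finset.prod_congr rfl
  intro j _
  have : (q : ℂ) ^ n * q ^ (-(n : ℤ)) = 1 := by
    rw [← zpow_natCast q n, ← zpow_add₀ hq]
    simp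
  calc q ^ n * (1 - q ^ (-(n : ℤ)) * q ^ j)
      = q ^ n - (q ^ n * q ^ (-(n : ℤ))) * q ^ j := by ring
    _ = q ^ n - q ^ j := by rw [this]; ring

lemma A2 (q : ℂ) (n k : ℕ) (hk : k ≤ n) :
    ∏ j ∈ range k, ((q : ℂ) ^ n - q ^ j)
      = (-1) ^ k * q ^ (∑ j ∈ range k, j) * ∏ j ∈ range k, (1 - q ^ (n - j)) := by
  have h1 : ∀ j ∈ range k, (q : ℂ) ^ n - q ^ j = (-1) * q ^ j * (1 - q ^ (n - j)) := by
    intro j hj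
    have hjk : j < k := mem_range.mp hj
    have : (q : ℂ) ^ j * q ^ (n - j) = q ^ n := by rw [← pow_add]; congr 1; omega
    linear_combination -this
  rw [Finset.prod_congr rfl h1]
  rw [Finset.prod_mul_distrib, Finset.prod_mul_distrib, Finset.prod_const,
    Finset.card_range, Finset.prod_pow_eq_pow_sum]

lemma A3 (q : ℂ) (n k : ℕ) (hk : k ≤ n) :
    qPoch q q (n - k) * ∏ j ∈ range k, (1 - (q : ℂ) ^ (n - j)) = qPoch q q n := by
  obtain ⟨m, rfl⟩ : ∃ m, n = m + k := ⟨n - k, by omega⟩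
  rw [show m + k - k = m from by omega]
  rw [qPoch_add q q m k]
  congr 1
  rw [qPoch]
  rw [← Finset.prod_range_reflect (fun i => 1 - (q * q ^ m) * q ^ i) k]
  apply Finset.prod_congr rfl
  intro j hj
  have hjk : j < k := mem_range.mp hj
  rw [show m + k - j = (m + (k - 1 - j)) + 1 from by omega]
  rw [pow_succ]
  ring

lemma summand (q b c : ℂ) (hq : q ≠ 0) (n k : ℕ) (hk : k ≤ n)
    (h1 : qPoch q q k ≠ 0) (h2 : qPoch q q (n - k) ≠ 0) (h3 : qPoch c q k ≠ 0) :
    qPoch (q ^ (-(n : ℤ))) q k * qPoch b q k / (qPoch q q k * qPoch c q k) * q ^ k *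
      qPoch c q n = T q n k b c := by
  have hsplit : qPoch c q n = qPoch c q k * qPoch (c * q ^ k) q (n - k) := by
    rw [← qPoch_add]; congr 1; omega
  have key : qPoch (q ^ (-(n : ℤ))) q k * (q ^ (n * k) * qPoch q q (n - k))
      = (-1) ^ k * q ^ (∑ j ∈ range k, j) * (qb q n k * qPoch q q k) * qPoch q q (n - k) := by
    calc qPoch (q ^ (-(n : ℤ))) q k * (q ^ (n * k) * qPoch q q (n - k))
        = (q ^ (n * k) * qPoch (q ^ (-(n : ℤ))) q k) * qPoch q q (n - k) := by ring
      _ = (∏ j ∈ range k, ((q : ℂ) ^ n - q ^ j)) * qPoch q q (n - k) := by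
          rw [A1 q hq n k]
      _ = (-1) ^ k * q ^ (∑ j ∈ range k, j) *
            (qPoch q q (n - k) * ∏ j ∈ range k, (1 - (q : ℂ) ^ (n - j))) := by
          rw [A2 q n k hk]; ring
      _ = (-1) ^ k * q ^ (∑ j ∈ range k, j) * qPoch q q n := by rw [A3 q n k hk]
      _ = (-1) ^ k * q ^ (∑ j ∈ range k, j) * (qb q n k * (qPoch q q k * qPoch q q (n - k))) := by
          rw [qb_mul q n k hk]
      _ = _ := by ring
  have e : qPoch (q ^ (-(n : ℤ))) q k
      = (-1) ^ k * q ^ (∑ j ∈ range k, j) * qb q n k * qPoch q q k * (q ^ (n * k))⁻¹ := by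
    have hnk : (q : ℂ) ^ (n * k) ≠ 0 := pow_ne_zero _ hq
    have hinv : ((q : ℂ) ^ (n * k))⁻¹ * q ^ (n * k) = 1 := inv_mul_cancel₀ hnk
    apply mul_right_cancel₀ (mul_ne_zero hnk h2)
    linear_combination key - ((-1) ^ k * q ^ (∑ j ∈ range k, j) * qb q n k *
      qPoch q q k * qPoch q q (n - k)) * hinv
  rw [e, hsplit, T]
  field_simp


end QVAux

/-- The q-Vandermonde summation:
₂φ₁[q^{−n}, b; c; q, q] = (c/b; q)_n bⁿ / (c; q)_n. -/
theorem q_vandermonde (n : ℕ) (q b c : ℂ) (hq : q ≠ 0) (hb : b ≠ 0)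
    (hden : ∀ k ≤ n, qPoch q q k ≠ 0 ∧ qPoch c q k ≠ 0)
    (hc : qPoch c q n ≠ 0) :
    ∑ k ∈ range (n + 1),
        qPoch (q ^ (-(n : ℤ))) q k * qPoch b q k / (qPoch q q k * qPoch c q k) * q ^ k
      = qPoch (c / b) q n * b ^ n / qPoch c q n := by
  have hR : qPoch (c / b) q n * b ^ n = ∏ j ∈ range n, (b - c * q ^ j) := by
    rw [qPoch, show (b : ℂ) ^ n = ∏ _j ∈ range n, b from by
      rw [Finset.prod_const, Finset.card_range]]
    rw [← Finset.prod_mul_distrib]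
    apply Finset.prod_congr rfl
    intro j _
    field_simp
  rw [eq_div_iff hc, hR, Finset.sum_mul]
  rw [Finset.sum_congr rfl (fun k hk => by
    have hkn : k ≤ n := by have := mem_range.mp hk; omega
    exact QVAux.summand q b c hq n k hkn (hden k hkn).1 (hden (n - k) (by omega)).1
      (hden k hkn).2)]
  exact QVAux.main q hq n b c
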